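/- For the Shi poset of the element w_{T,N} (N ≥ 1) associated to a row-standard tabloid T, one has i <_P j in the Shi poset if and only if j lies in a strictly higher row of T than i (i.e., the row index of j is strictly smaller than that of i). -/

import Mathlib

/-- For `w = w_{T,N}` (`N ≥ 1`) associated to a row-standard tabloid `T` of
shape `α` (rows encoded by `r` = row index, `j` = position in row, with
`w x = N n (l − r x) + L_{r x} + j x` on `[1,n]`), the Shi order satisfies:
`i <_P j` iff `j` lies in a strictly higher row of `T` than `i`. -/
theorem stmt14 (n l N : ℕ) (hn : 0 < n) (hl : 0 < l) (hN : 1 ≤ N)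
    (α : ℕ → ℕ)
    (hpos : ∀ i : ℕ, 1 ≤ i → i ≤ l → 0 < α i)
    (hsum : ∑ i ∈ Finset.Icc 1 l, α i = n)
    (r : ℤ → ℕ) (j : ℤ → ℕ)
    (hrj : ∀ x : ℤ, 1 ≤ x → x ≤ n →
      1 ≤ r x ∧ r x ≤ l ∧ 1 ≤ j x ∧ j x ≤ α (r x))
    (hinj : ∀ x y : ℤ, 1 ≤ x → x ≤ n → 1 ≤ y → y ≤ n →
      r x = r y → j x = j y → x = y)
    (hsurj : ∀ i jj : ℕ, 1 ≤ i → i ≤ l → 1 ≤ jj → jj ≤ α i →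
      ∃ x : ℤ, 1 ≤ x ∧ x ≤ n ∧ r x = i ∧ j x = jj)
    (hrow : ∀ x y : ℤ, 1 ≤ x → x ≤ n → 1 ≤ y → y ≤ n →
      r x = r y → x < y → j x < j y)
    (w : ℤ → ℤ)
    (hw : ∀ x : ℤ, 1 ≤ x → x ≤ n →
      w x = ((N * n * (l - r x) : ℕ) : ℤ) +
        ((∑ m ∈ Finset.Icc (r x + 1) l, α m : ℕ) : ℤ) + (j x : ℤ)) :
    ∀ x y : ℤ, 1 ≤ x → x ≤ n → 1 ≤ y → y ≤ n →
      (((x > y ∧ w x < w y) ∨ w y > w x + (n : ℤ)) ↔ r y < r x) := by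
  -- abbreviation L
  set L : ℕ → ℕ := fun i => ∑ m ∈ Finset.Icc (i + 1) l, α m with hLdef
  have hLmono : ∀ i i' : ℕ, i ≤ i' → L i' ≤ L i := by
    intro i i' h
    exact Finset.sum_le_sum_of_subset (Finset.Icc_subset_Icc (by omega) le_rfl)
  have hLstep : ∀ i : ℕ, 1 ≤ i → i ≤ l → L (i - 1) = α i + L i := by
    intro i h1 h2
    have he : Finset.Icc (i - 1 + 1) l = Finset.Icc i l := by
      congr 1; omega
    have hc : Finset.Icc i l = Finset.cons i (Finset.Ioc i l) (by simp) :=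
      Finset.Icc_eq_cons_Ioc h2
    have : Finset.Icc (i + 1) l = Finset.Ioc i l := Finset.Icc_add_one_left_eq_Ioc i l
    simp only [hLdef, he, hc, Finset.sum_cons, this]
  have hL0 : L 0 = n := by
    simpa [hLdef] using hsum
  have hαn : ∀ i : ℕ, 1 ≤ i → i ≤ l → α i ≤ n := by
    intro i h1 h2
    rw [← hsum]
    exact Finset.single_le_sum (f := α) (fun _ _ => Nat.zero_le _)
      (Finset.mem_Icc.mpr ⟨h1, h2⟩)
  -- bound: L (r x) + j x ≤ n for valid x
  have hbound : ∀ x : ℤ, 1 ≤ x → x ≤ n → L (r x) + j x ≤ n := by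
    intro x hx1 hx2
    obtain ⟨h1, h2, h3, h4⟩ := hrj x hx1 hx2
    have := hLstep (r x) h1 h2
    have h5 : L (r x - 1) ≤ L 0 := hLmono 0 _ (Nat.zero_le _)
    omega
  -- key: r y < r x → w x + n < w y
  have key : ∀ x y : ℤ, 1 ≤ x → x ≤ n → 1 ≤ y → y ≤ n →
      r y < r x → w x + (n : ℤ) < w y := by
    intro x y hx1 hx2 hy1 hy2 hlt
    obtain ⟨hx3, hx4, hx5, hx6⟩ := hrj x hx1 hx2
    obtain ⟨hy3, hy4, hy5, hy6⟩ := hrj y hy1 hy2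
    -- L part
    have hLpart : L (r x) + j x + 1 ≤ L (r y) + j y := by
      have h1 := hLstep (r x) hx3 hx4
      have h2 : L (r x - 1) ≤ L (r y) := hLmono _ _ (by omega)
      omega
    -- gap part
    have hgap : N * n * (l - r x) + n ≤ N * n * (l - r y) := by
      have h1 : l - r x + 1 ≤ l - r y := by omega
      calc N * n * (l - r x) + n ≤ N * n * (l - r x) + N * n := by
            have : n ≤ N * n := Nat.le_mul_of_pos_left n (by omega)
            omega
        _ = N * n * (l - r x + 1) := by ring
        _ ≤ N * n * (l - r y) := Nat.mul_le_mul_left _ h1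
    rw [hw x hx1 hx2, hw y hy1 hy2]
    have hLpart' : ((L (r x) : ℤ) + (j x : ℤ)) + 1 ≤ (L (r y) : ℤ) + (j y : ℤ) := by
      exact_mod_cast hLpart
    have hgap' : ((N * n * (l - r x) : ℕ) : ℤ) + (n : ℤ) ≤ ((N * n * (l - r y) : ℕ) : ℤ) := by
      exact_mod_cast hgap
    simp only [hLdef] at hLpart' ⊢
    linarith
  intro x y hx1 hx2 hy1 hy2
  constructor
  · rintro (⟨hxy, hwlt⟩ | hgt)
    · by_contra hc
      push_neg at hc
      rcases lt_or_eq_of_le hc with h | h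
      · have := key y x hy1 hy2 hx1 hx2 h
        have hn' : (0 : ℤ) ≤ (n : ℤ) := Int.ofNat_nonneg n
        linarith
      · -- r x = r y, x > y, w x < w y : contradiction via hrow
        have hwx := hw x hx1 hx2
        have hwy := hw y hy1 hy2
        rw [← h] at hwy
        have hj : j y < j x := hrow y x hy1 hy2 hx1 hx2 (by rw [h]) hxy
        have : (j x : ℤ) < (j y : ℤ) := by
          rw [hwx, hwy] at hwlt
          linarith
        exact absurd (by exact_mod_cast this) (by omega)
    · by_contra hc
      push_neg at hc
      rcases lt_or_eq_of_le hc with h | h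
      · have := key y x hy1 hy2 hx1 hx2 h
        have hn' : (0 : ℤ) ≤ (n : ℤ) := Int.ofNat_nonneg n
        linarith
      · have hwx := hw x hx1 hx2
        have hwy := hw y hy1 hy2
        rw [← h] at hwy
        obtain ⟨hx3, hx4, hx5, hx6⟩ := hrj x hx1 hx2
        obtain ⟨hy3, hy4, hy5, hy6⟩ := hrj y hy1 hy2
        rw [← h] at hy6
        have h1 : j y ≤ n := le_trans hy6 (hαn _ hx3 hx4)
        have h2 : (j y : ℤ) ≤ (n : ℤ) := by exact_mod_cast h1
        have h3 : (1 : ℤ) ≤ (j x : ℤ) := by exact_mod_cast hx5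
        rw [hwx, hwy] at hgt
        linarith
  · intro hlt
    exact Or.inr (key x y hx1 hx2 hy1 hy2 hlt)
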